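/- Let ω₁, ω₂ ∈ ℂ be linearly independent over ℝ, and let Λ = {a·ω₁ + b·ω₂ : a, b ∈ ℤ} be the lattice they generate. Let F : ℂ → ℂ be an entire function such that F(w + λ) − F(w) ∈ Λ for every w ∈ ℂ and every λ ∈ Λ. Then there exist α, β ∈ ℂ such that F(w) = α·w + β for all w ∈ ℂ, and α·λ ∈ Λ for every λ ∈ Λ. -/

import Mathlib

open Set Function Bornology

/-- A continuous function into a countable set is constant. -/
lemma const_of_countable_aux {g : ℂ → ℂ} (hg : Continuous g) {S : Set ℂ} (hS : S.Countable)
    (hmem : ∀ w, g w ∈ S) (x y : ℂ) : g x = g y := by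
  by_contra hxy
  set f : ℂ → ℝ := fun w => ‖g w - g x‖ with hf
  have hfc : Continuous f := (hg.sub continuous_const).norm
  have hconn : IsPreconnected (range f) := isPreconnected_range hfc
  have h0 : (0 : ℝ) ∈ range f := ⟨x, by simp [hf]⟩
  have hd : ‖g y - g x‖ ∈ range f := ⟨y, rfl⟩
  have hlt : (0 : ℝ) < ‖g y - g x‖ := by
    rw [norm_pos_iff, sub_ne_zero]; exact fun h => hxy h.symm
  have hsub : Icc (0 : ℝ) ‖g y - g x‖ ⊆ range f := hconn.ordConnected.out h0 hd
  have hcnt : (range f).Countable := by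
    have : range f ⊆ (fun z : ℂ => ‖z - g x‖) '' S := by
      rintro _ ⟨w, rfl⟩; exact ⟨g w, hmem w, rfl⟩
    exact (hS.image _).mono this
  have hIcc : (Icc (0 : ℝ) ‖g y - g x‖).Countable := hcnt.mono hsub
  have h1 : (Cardinal.mk (Icc (0 : ℝ) ‖g y - g x‖)) = Cardinal.continuum :=
    Cardinal.mk_Icc_real hlt
  have h2 : (Cardinal.mk (Icc (0 : ℝ) ‖g y - g x‖)) ≤ Cardinal.aleph0 :=
    Cardinal.mk_le_aleph0_iff.mpr (Set.countable_coe_iff.mpr hIcc)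
  rw [h1] at h2
  exact absurd h2 (not_le.mpr Cardinal.aleph0_lt_continuum)

/-- an entire function whose increments along a lattice `Λ = ℤω₁ + ℤω₂` lie
in `Λ` is affine-linear `w ↦ αw + β` with `αΛ ⊆ Λ`. -/
theorem stmt_14 (ω₁ ω₂ : ℂ)
    (hindep : ∀ s t : ℝ, (s : ℂ) * ω₁ + (t : ℂ) * ω₂ = 0 → s = 0 ∧ t = 0)
    (F : ℂ → ℂ) (hF : Differentiable ℂ F)
    (hper : ∀ w : ℂ,
      ∀ lam ∈ {z : ℂ | ∃ a b : ℤ, z = (a : ℂ) * ω₁ + (b : ℂ) * ω₂},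
        F (w + lam) - F w ∈ {z : ℂ | ∃ a b : ℤ, z = (a : ℂ) * ω₁ + (b : ℂ) * ω₂}) :
    ∃ α β : ℂ, (∀ w : ℂ, F w = α * w + β) ∧
      ∀ lam ∈ {z : ℂ | ∃ a b : ℤ, z = (a : ℂ) * ω₁ + (b : ℂ) * ω₂},
        α * lam ∈ {z : ℂ | ∃ a b : ℤ, z = (a : ℂ) * ω₁ + (b : ℂ) * ω₂} := by
  set Λ : Set ℂ := {z : ℂ | ∃ a b : ℤ, z = (a : ℂ) * ω₁ + (b : ℂ) * ω₂} with hΛ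
  -- Λ is countable
  have hΛc : Λ.Countable := by
    have : Λ = Set.range (fun p : ℤ × ℤ => (p.1 : ℂ) * ω₁ + (p.2 : ℂ) * ω₂) := by
      ext z
      constructor
      · rintro ⟨a, b, rfl⟩; exact ⟨(a, b), rfl⟩
      · rintro ⟨⟨a, b⟩, rfl⟩; exact ⟨a, b, rfl⟩
    rw [this]; exact Set.countable_range _
  have hω₁Λ : ω₁ ∈ Λ := ⟨1, 0, by push_cast; ring⟩
  have hω₂Λ : ω₂ ∈ Λ := ⟨0, 1, by push_cast; ring⟩
  -- linear independence and basis
  have hli : LinearIndependent ℝ ![ω₁, ω₂] := by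
    rw [LinearIndependent.pair_iff]
    intro s t hst
    exact hindep s t (by simpa [Complex.real_smul] using hst)
  have hcard : Fintype.card (Fin 2) = Module.finrank ℝ ℂ := by
    simp [Complex.finrank_real_complex]
  let B : Module.Basis (Fin 2) ℝ ℂ := basisOfLinearIndependentOfCardEqFinrank hli hcard
  have hB : ∀ i, B i = ![ω₁, ω₂] i := fun i => by
    rw [coe_basisOfLinearIndependentOfCardEqFinrank]
  -- each increment function is constant
  have hcst : ∀ ω, ω ∈ Λ → ∀ w : ℂ, F (w + ω) - F w = F (0 + ω) - F 0 := by
    intro ω hω w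
    have hgc : Continuous (fun w : ℂ => F (w + ω) - F w) :=
      ((hF.comp ((differentiable_id).add_const ω)).sub hF).continuous
    exact const_of_countable_aux hgc hΛc (fun w => hper w ω hω) w 0
  -- deriv F is periodic
  have hder : ∀ ω, ω ∈ Λ → Function.Periodic (deriv F) ω := by
    intro ω hω w
    set c := F (0 + ω) - F 0 with hc
    have h1 : HasDerivAt (fun w : ℂ => F (w + ω)) (deriv F (w + ω)) w := by
      have := ((hF (w + ω)).hasDerivAt).comp w ((hasDerivAt_id w).add_const ω)
      simpa [Function.comp_def] using this
    have heq : (fun w : ℂ => F (w + ω)) = fun w : ℂ => F w + c := by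
      funext u
      have := hcst ω hω u
      rw [← hc] at this
      linear_combination this
    rw [heq] at h1
    have h2 : HasDerivAt (fun w : ℂ => F w + c) (deriv F w) w :=
      (hF w).hasDerivAt.add_const c
    exact h1.unique h2
  have hp₁ : Function.Periodic (deriv F) ω₁ := hder ω₁ hω₁Λ
  have hp₂ : Function.Periodic (deriv F) ω₂ := hder ω₂ hω₂Λ
  -- deriv F is smooth
  have hFi : ContDiff ℂ ⊤ F := hF.contDiff
  have hdF : Differentiable ℂ (deriv F) := (contDiff_infty_iff_deriv.mp (hF.contDiff)).2.differentiable (by simp)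
  have hdFc : Continuous (deriv F) := hdF.continuous
  -- bounded: fundamental domain
  set K : Set ℂ := (fun p : ℝ × ℝ => (p.1 : ℂ) * ω₁ + (p.2 : ℂ) * ω₂) '' (Icc 0 1 ×ˢ Icc 0 1) with hK
  have hKc : IsCompact K := by
    apply (isCompact_Icc.prod isCompact_Icc).image
    exact ((Complex.continuous_ofReal.comp continuous_fst).mul continuous_const).add
      ((Complex.continuous_ofReal.comp continuous_snd).mul continuous_const)
  have hrange : range (deriv F) ⊆ deriv F '' K := by
    rintro _ ⟨z, rfl⟩
    set s := B.repr z 0 with hs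
    set t := B.repr z 1 with ht
    have hz : z = (s : ℂ) * ω₁ + (t : ℂ) * ω₂ := by
      have := B.sum_repr z
      rw [Fin.sum_univ_two, hB 0, hB 1] at this
      simp only [Matrix.cons_val_zero, Matrix.cons_val_one, Matrix.head_cons] at this
      rw [← this, Complex.real_smul, Complex.real_smul]
    set z₀ : ℂ := ((Int.fract s : ℝ) : ℂ) * ω₁ + ((Int.fract t : ℝ) : ℂ) * ω₂ with hz₀
    have hz₀K : z₀ ∈ K := by
      refine ⟨(Int.fract s, Int.fract t), ⟨⟨Int.fract_nonneg s, (Int.fract_lt_one s).le⟩,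
        ⟨Int.fract_nonneg t, (Int.fract_lt_one t).le⟩⟩, rfl⟩
    have hzz : z = z₀ + (⌊s⌋ : ℂ) * ω₁ + (⌊t⌋ : ℂ) * ω₂ := by
      rw [hz, hz₀]
      have h1 : ((Int.fract s : ℝ) : ℂ) = (s : ℂ) - (⌊s⌋ : ℂ) := by
        rw [Int.fract]; push_cast; ring
      have h2 : ((Int.fract t : ℝ) : ℂ) = (t : ℂ) - (⌊t⌋ : ℂ) := by
        rw [Int.fract]; push_cast; ring
      rw [h1, h2]; ring
    have : deriv F z = deriv F z₀ := by
      rw [hzz]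
      have e1 : z₀ + (⌊s⌋ : ℂ) * ω₁ + (⌊t⌋ : ℂ) * ω₂
          = (z₀ + (⌊s⌋ : ℂ) * ω₁) + (⌊t⌋ : ℂ) * ω₂ := by ring
      rw [e1, hp₂.int_mul ⌊t⌋ (z₀ + (⌊s⌋ : ℂ) * ω₁), hp₁.int_mul ⌊s⌋ z₀]
    rw [this]
    exact ⟨z₀, hz₀K, rfl⟩
  have hbdd : IsBounded (range (deriv F)) :=
    ((hKc.image hdFc).isBounded).subset hrange
  -- Liouville
  set α := deriv F 0 with hα
  have hconst : ∀ w : ℂ, deriv F w = α := fun w =>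
    hdF.apply_eq_apply_of_bounded hbdd w 0
  -- F is affine
  have hG : ∀ w : ℂ, F w - α * w = F 0 - α * 0 := by
    intro w
    apply is_const_of_deriv_eq_zero (𝕜 := ℂ)
      (hF.sub ((differentiable_id).const_mul α))
    intro x
    have h1 : HasDerivAt (fun w : ℂ => F w - α * id w) (deriv F x - α) x := by
      exact ((hF x).hasDerivAt.sub ((hasDerivAt_id x).const_mul α)).congr_deriv (by rw [mul_one])
    rw [HasDerivAt.deriv (f := F - fun y => α * id y) h1, hconst x, sub_self]
  refine ⟨α, F 0, fun w => ?_, fun lam hlam => ?_⟩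
  · have := hG w; linear_combination this
  · have h := hper 0 lam hlam
    have hFl : F (0 + lam) = α * (0 + lam) + F 0 := by
      have := hG (0 + lam)
      simp only [mul_zero, sub_zero] at this
      linear_combination this
    rw [hFl] at h
    simpa using h
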